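/- Let A be a unital C*-algebra, let α : 𝕋 → Aut(A) be a continuous action, and let v be a unitary in A with ‖α_ζ(v) − ζ·v‖ ≤ ε₀ for all ζ ∈ 𝕋, where ε₀ < 1/2. Define x = ∫_𝕋 conj(ζ)·α_ζ(v) dμ(ζ), where μ is normalized Haar measure on 𝕋. Then ‖x‖ ≤ 1, ‖x − v‖ ≤ ε₀, ‖x*x − 1‖ ≤ 2ε₀, and α_ζ(x) = ζ·x for all ζ ∈ 𝕋. -/

import Mathlib

open MeasureTheory

/-- averaging a Rokhlin-type unitary over the circle: if `v` is a unitary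
with `‖α_ζ(v) − ζ·v‖ ≤ ε₀ < 1/2` for all `ζ`, then `x = ∫ conj(ζ)·α_ζ(v) dμ(ζ)` satisfies
`‖x‖ ≤ 1`, `‖x − v‖ ≤ ε₀`, `‖x*x − 1‖ ≤ 2ε₀`, and `α_ζ(x) = ζ·x` for all `ζ`. -/
theorem stmt_11 {A : Type*} [CStarAlgebra A]
    [MeasurableSpace Circle] [BorelSpace Circle]
    (μ : Measure Circle) [μ.IsHaarMeasure] [IsProbabilityMeasure μ]
    (α : Circle → A ≃⋆ₐ[ℂ] A)
    (hone : ∀ x : A, α 1 x = x)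
    (hmul : ∀ ζ η : Circle, ∀ x : A, α (ζ * η) x = α ζ (α η x))
    (hcont : ∀ x : A, Continuous fun ζ : Circle => α ζ x)
    (v : A) (hv : v ∈ unitary A) (ε₀ : ℝ) (hε₀ : ε₀ < 1 / 2)
    (hvε : ∀ ζ : Circle, ‖α ζ v - (ζ : ℂ) • v‖ ≤ ε₀) :
    let x : A := ∫ ζ : Circle, (starRingEnd ℂ) (ζ : ℂ) • α ζ v ∂μ
    ‖x‖ ≤ 1 ∧ ‖x - v‖ ≤ ε₀ ∧ ‖star x * x - 1‖ ≤ 2 * ε₀ ∧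
      ∀ ζ : Circle, α ζ x = (ζ : ℂ) • x := by
  intro x
  have hε0 : (0 : ℝ) ≤ ε₀ := by
    have := hvε 1
    simpa [hone v] using this
  rcases subsingleton_or_nontrivial A with hA | hA
  · refine ⟨?_, ?_, ?_, fun ζ => Subsingleton.elim _ _⟩
    · calc ‖x‖ = ‖(0 : A)‖ := by rw [Subsingleton.elim x (0 : A)]
        _ ≤ 1 := by simp
    · calc ‖x - v‖ = ‖(0 : A)‖ := by rw [Subsingleton.elim (x - v) (0 : A)]
        _ ≤ ε₀ := by simpa using hε0
    · have h0 : star x * x - 1 = (0 : A) := Subsingleton.elim _ _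
      rw [h0, norm_zero]
      linarith
  -- conj coefficients have norm 1
  have hcnorm : ∀ ζ : Circle, ‖(starRingEnd ℂ) (ζ : ℂ)‖ = 1 := fun ζ => by
    simp [RCLike.norm_conj, Circle.norm_coe]
  have hvnorm : ‖v‖ = 1 := CStarRing.norm_of_mem_unitary hv
  have hnormα : ∀ ζ : Circle, ‖α ζ v‖ = 1 := fun ζ => by
    rw [StarAlgEquiv.norm_map, hvnorm]
  -- integrability
  have hfc : Continuous fun ζ : Circle => (starRingEnd ℂ) (ζ : ℂ) • α ζ v := by
    exact ((Complex.continuous_conj.comp continuous_subtype_val)).smul (hcont v)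
  have hint : Integrable (fun ζ : Circle => (starRingEnd ℂ) (ζ : ℂ) • α ζ v) μ :=
    hfc.integrable_of_hasCompactSupport (IsCompact.of_isClosed_subset isCompact_univ
      (isClosed_tsupport _) (Set.subset_univ _))
  have hmeas_univ : (μ Set.univ).toReal = 1 := by simp
  -- ‖x‖ ≤ 1
  have h1 : ‖x‖ ≤ 1 := by
    have := norm_integral_le_of_norm_le_const (μ := μ) (C := 1)
      (f := fun ζ : Circle => (starRingEnd ℂ) (ζ : ℂ) • α ζ v)
      (Filter.Eventually.of_forall fun ζ => by
        rw [norm_smul, hcnorm, hnormα, one_mul])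
    simpa [hmeas_univ] using this
  -- ‖x - v‖ ≤ ε₀
  have hconjmul : ∀ ζ : Circle, (starRingEnd ℂ) (ζ : ℂ) * (ζ : ℂ) = 1 := fun ζ => by
    rw [← Circle.coe_inv_eq_conj, ← Circle.coe_mul, inv_mul_cancel, Circle.coe_one]
  have hvint : v = ∫ _ : Circle, v ∂μ := by
    rw [integral_const, measureReal_def, hmeas_univ, one_smul]
  have h2 : ‖x - v‖ ≤ ε₀ := by
    have hxv : x - v = ∫ ζ : Circle, ((starRingEnd ℂ) (ζ : ℂ) • α ζ v - v) ∂μ := by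
      rw [integral_sub hint (integrable_const v)]
      rw [← hvint]
    rw [hxv]
    have := norm_integral_le_of_norm_le_const (μ := μ) (C := ε₀)
      (f := fun ζ : Circle => (starRingEnd ℂ) (ζ : ℂ) • α ζ v - v)
      (Filter.Eventually.of_forall fun ζ => by
        show ‖(starRingEnd ℂ) (ζ : ℂ) • α ζ v - v‖ ≤ ε₀
        have key : (starRingEnd ℂ) (ζ : ℂ) • α ζ v - v
            = (starRingEnd ℂ) (ζ : ℂ) • (α ζ v - (ζ : ℂ) • v) := by
          rw [smul_sub, smul_smul, hconjmul, one_smul]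
        rw [key, norm_smul, hcnorm, one_mul]
        exact hvε ζ)
    simpa [hmeas_univ] using this
  refine ⟨h1, h2, ?_, ?_⟩
  -- ‖star x * x - 1‖ ≤ 2ε₀
  · have hvv : star v * v = 1 := (Unitary.mem_iff.mp hv).1
    have key : star x * x - 1 = star x * (x - v) + (star x - star v) * v := by
      rw [← hvv]; noncomm_ring
    rw [key]
    calc ‖star x * (x - v) + (star x - star v) * v‖
        ≤ ‖star x * (x - v)‖ + ‖(star x - star v) * v‖ := norm_add_le _ _
      _ ≤ ‖star x‖ * ‖x - v‖ + ‖star x - star v‖ * ‖v‖ :=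
          add_le_add (norm_mul_le _ _) (norm_mul_le _ _)
      _ = ‖x‖ * ‖x - v‖ + ‖x - v‖ * 1 := by
          rw [norm_star, hvnorm, ← norm_star (x - v), star_sub]
      _ ≤ 1 * ε₀ + ε₀ * 1 := by
          gcongr
      _ = 2 * ε₀ := by ring
  -- equivariance
  · intro η
    -- α η as a continuous linear map
    let T : A →L[ℂ] A :=
      ⟨{ toFun := α η, map_add' := map_add _, map_smul' := map_smul _ },
        (StarAlgEquiv.isometry (α η)).continuous⟩
    have hT : ∀ a : A, T a = α η a := fun _ => rfl
    have hcomm : α η x = ∫ ζ : Circle, T ((starRingEnd ℂ) (ζ : ℂ) • α ζ v) ∂μ := by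
      rw [← hT, ContinuousLinearMap.integral_comp_comm T hint]
    have hηconj : (η : ℂ) * (starRingEnd ℂ) (η : ℂ) = 1 := by
      rw [mul_comm]; exact hconjmul η
    set g : Circle → A := fun ξ => ((η : ℂ) * (starRingEnd ℂ) (ξ : ℂ)) • α ξ v with hg
    have hgη : ∀ ζ : Circle, T ((starRingEnd ℂ) (ζ : ℂ) • α ζ v) = g (η * ζ) := by
      intro ζ
      rw [hT, _root_.map_smul]
      simp only [hg, Circle.coe_mul, map_mul]
      rw [← mul_assoc, hηconj, one_mul, ← hmul]
    rw [hcomm]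
    calc (∫ ζ : Circle, T ((starRingEnd ℂ) (ζ : ℂ) • α ζ v) ∂μ)
        = ∫ ζ : Circle, g (η * ζ) ∂μ := by simp_rw [hgη]
      _ = ∫ ξ : Circle, g ξ ∂μ := integral_mul_left_eq_self g η
      _ = ∫ ξ : Circle, (η : ℂ) • ((starRingEnd ℂ) (ξ : ℂ) • α ξ v) ∂μ := by
          simp_rw [hg, mul_smul]
      _ = (η : ℂ) • x := integral_smul _ _
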